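/- Every $[p,q]$-graded $\lambda$-module $M$ over a graded $k$-algebra $A$ admits a Harder-Narasimhan filtration: a filtration $0 = M^0 \subset M^1 \subset \cdots \subset M^s = M$ by $\lambda$-submodules such that each quotient $M^i/M^{i-1}$ is semistable with respect to $(\theta_p,\theta_q) = (\dim M_q, -\dim M_p)$ and the successive quotients have strictly decreasing slopes in the sense $(M^1/M^0) \succ (M^2/M^1) \succ \cdots \succ (M^s/M^{s-1})$. -/

import Mathlib

section

variable {k A V : Type*} [Field k] [Ring A] [Algebra k A]
  [AddCommGroup V] [Module k V]

/-- `N` is a graded `λ`-submodule of the graded `λ`-module `(V, ℳ, lam)`: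
it is a graded subspace that is stable under the action map `lam`. -/
def IsLambdaSubmodule (ℳ : ℤ → Submodule k V) (lam : A →ₗ[k] V →ₗ[k] V)
    (N : Submodule k V) : Prop :=
  (N = ⨆ i, N ⊓ ℳ i) ∧ ∀ (a : A), ∀ v ∈ N, lam a v ∈ N

/-- Dimension of the degree-`i` part of a subspace `N`. -/
noncomputable def dimAt (ℳ : ℤ → Submodule k V) (N : Submodule k V) (i : ℤ) : ℤ :=
  (Module.finrank k ↥(N ⊓ ℳ i) : ℤ)

/-- Dimension in degree `i` of the quotient `B/Alow`. -/
noncomputable def qdim (ℳ : ℤ → Submodule k V) (Alow B : Submodule k V) (i : ℤ) : ℤ :=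
  dimAt ℳ B i - dimAt ℳ Alow i

/-- Slope `μ_{(θp,θq)}` of a (sub)quotient with dimensions `dp, dq` at degrees `p, q`. -/
noncomputable def slopeQ (θp θq dp dq : ℤ) : ℚ :=
  ((θp * dp + θq * dq : ℤ) : ℚ) / ((dp + dq : ℤ) : ℚ)

/-- Semistability with respect to `(θp,θq)` of the quotient `B/Alow`:
every intermediate `λ`-submodule either has zero dimension vector at `(p,q)` or slope
at most that of `B/Alow`. -/
noncomputable def SemistableQuot (ℳ : ℤ → Submodule k V) (lam : A →ₗ[k] V →ₗ[k] V)
    (p q θp θq : ℤ) (Alow B : Submodule k V) : Prop :=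
  ∀ N : Submodule k V, IsLambdaSubmodule ℳ lam N → Alow < N → N < B →
    (qdim ℳ Alow N p = 0 ∧ qdim ℳ Alow N q = 0) ∨
    ((qdim ℳ Alow N p + qdim ℳ Alow N q ≠ 0) ∧
      slopeQ θp θq (qdim ℳ Alow N p) (qdim ℳ Alow N q) ≤
        slopeQ θp θq (qdim ℳ Alow B p) (qdim ℳ Alow B q))

/-- The relation `(B₁/A₁) ≻ (B₂/A₂)` between two subquotients: either the second has zero
dimension vector at `(p,q)`, or both have nonzero dimension vectors and the first has
strictly bigger slope. -/
noncomputable def QuotGT (ℳ : ℤ → Submodule k V) (p q θp θq : ℤ)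
    (A1 B1 A2 B2 : Submodule k V) : Prop :=
  (qdim ℳ A2 B2 p = 0 ∧ qdim ℳ A2 B2 q = 0) ∨
  ((qdim ℳ A1 B1 p + qdim ℳ A1 B1 q ≠ 0) ∧ (qdim ℳ A2 B2 p + qdim ℳ A2 B2 q ≠ 0) ∧
    slopeQ θp θq (qdim ℳ A1 B1 p) (qdim ℳ A1 B1 q) >
      slopeQ θp θq (qdim ℳ A2 B2 p) (qdim ℳ A2 B2 q))


namespace HNaux


variable (ℳ : ℤ → Submodule k V)

lemma component_mem [DirectSum.Decomposition ℳ]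
    {N : Submodule k V} (hN : N = ⨆ i, N ⊓ ℳ i) {v : V} (hv : v ∈ N) (i : ℤ) :
    (DirectSum.decompose ℳ v i : V) ∈ N ⊓ ℳ i := by
  rw [hN] at hv
  refine Submodule.iSup_induction (motive := fun x => (DirectSum.decompose ℳ x i : V) ∈ N ⊓ ℳ i)
    _ hv ?_ ?_ ?_
  · intro j x hx
    rcases eq_or_ne j i with rfl | hne
    · rwa [DirectSum.decompose_of_mem_same ℳ hx.2]
    · rw [DirectSum.decompose_of_mem_ne ℳ hx.2 hne]; exact zero_mem _
  · simp
  · intro x y hx hy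
    rw [DirectSum.decompose_add]
    simpa using add_mem hx hy

lemma sup_grade (hdec : DirectSum.IsInternal fun i => ℳ i)
    {N N' : Submodule k V} (hN : N = ⨆ i, N ⊓ ℳ i) (hN' : N' = ⨆ i, N' ⊓ ℳ i) (i : ℤ) :
    (N ⊔ N') ⊓ ℳ i = (N ⊓ ℳ i) ⊔ (N' ⊓ ℳ i) := by
  letI : DirectSum.Decomposition ℳ := hdec.chooseDecomposition
  refine le_antisymm ?_ (sup_le (inf_le_inf_right _ le_sup_left)
    (inf_le_inf_right _ le_sup_right))
  rintro x ⟨hx1, hx2⟩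
  obtain ⟨n, hn, n', hn', rfl⟩ := Submodule.mem_sup.1 hx1
  have hxeq : n + n' = (DirectSum.decompose ℳ n i : V) + (DirectSum.decompose ℳ n' i : V) := by
    conv_lhs => rw [← DirectSum.decompose_of_mem_same ℳ hx2]
    rw [DirectSum.decompose_add]; simp
  rw [hxeq]
  exact Submodule.add_mem_sup (component_mem ℳ hN hn i) (component_mem ℳ hN' hn' i)

lemma lambda_bot (lam : A →ₗ[k] V →ₗ[k] V) : IsLambdaSubmodule ℳ lam ⊥ := by
  constructor
  · simp
  · intro a v hv
    simp only [Submodule.mem_bot] at hv ⊢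
    rw [hv, map_zero]

lemma lambda_top (hdec : DirectSum.IsInternal fun i => ℳ i) (lam : A →ₗ[k] V →ₗ[k] V) :
    IsLambdaSubmodule ℳ lam ⊤ := by
  refine ⟨?_, fun a v _ => trivial⟩
  simpa [top_inf_eq] using (hdec.submodule_iSup_eq_top).symm

lemma lambda_sup (hdec : DirectSum.IsInternal fun i => ℳ i) {lam : A →ₗ[k] V →ₗ[k] V}
    {N N' : Submodule k V} (h1 : IsLambdaSubmodule ℳ lam N) (h2 : IsLambdaSubmodule ℳ lam N') :
    IsLambdaSubmodule ℳ lam (N ⊔ N') := by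
  constructor
  · refine le_antisymm ?_ (iSup_le fun i => inf_le_left)
    refine sup_le ?_ ?_
    · conv_lhs => rw [h1.1]
      exact iSup_mono fun i => inf_le_inf_right _ le_sup_left
    · conv_lhs => rw [h2.1]
      exact iSup_mono fun i => inf_le_inf_right _ le_sup_right
  · intro a v hv
    obtain ⟨n, hn, n', hn', rfl⟩ := Submodule.mem_sup.1 hv
    rw [map_add]
    exact Submodule.add_mem_sup (h1.2 a n hn) (h2.2 a n' hn')

lemma lambda_inf (hdec : DirectSum.IsInternal fun i => ℳ i) {lam : A →ₗ[k] V →ₗ[k] V}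
    {N N' : Submodule k V} (h1 : IsLambdaSubmodule ℳ lam N) (h2 : IsLambdaSubmodule ℳ lam N') :
    IsLambdaSubmodule ℳ lam (N ⊓ N') := by
  letI : DirectSum.Decomposition ℳ := hdec.chooseDecomposition
  constructor
  · refine le_antisymm ?_ (iSup_le fun i => inf_le_left)
    rintro x ⟨hx1, hx2⟩
    classical
    rw [← DirectSum.sum_support_decompose ℳ x]
    refine Submodule.sum_mem _ fun i _ => Submodule.mem_iSup_of_mem i ?_
    have m1 := component_mem ℳ h1.1 hx1 i
    have m2 := component_mem ℳ h2.1 hx2 i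
    exact ⟨⟨m1.1, m2.1⟩, m1.2⟩
  · intro a v hv
    exact ⟨h1.2 a v hv.1, h2.2 a v hv.2⟩

section Dims

variable (p q θp θq : ℤ)

noncomputable def rk (N : Submodule k V) : ℤ := dimAt ℳ N p + dimAt ℳ N q

noncomputable def dg (N : Submodule k V) : ℤ :=
  θp * dimAt ℳ N p + θq * dimAt ℳ N q

noncomputable def slp (F N : Submodule k V) : ℚ :=
  slopeQ θp θq (qdim ℳ F N p) (qdim ℳ F N q)

lemma slp_eq (F N : Submodule k V) :
    slp ℳ p q θp θq F N =
      ((dg ℳ p q θp θq N - dg ℳ p q θp θq F : ℤ) : ℚ) /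
        ((rk ℳ p q N - rk ℳ p q F : ℤ) : ℚ) := by
  unfold slp slopeQ qdim dg rk
  congr 1 <;> push_cast <;> ring

lemma dimAt_nonneg (N : Submodule k V) (i : ℤ) : 0 ≤ dimAt ℳ N i :=
  Int.natCast_nonneg _

variable [FiniteDimensional k V]

lemma dimAt_mono {N N' : Submodule k V} (h : N ≤ N') (i : ℤ) :
    dimAt ℳ N i ≤ dimAt ℳ N' i := by
  unfold dimAt
  exact_mod_cast Submodule.finrank_mono (inf_le_inf_right (ℳ i) h)

lemma rk_mono {N N' : Submodule k V} (h : N ≤ N') : rk ℳ p q N ≤ rk ℳ p q N' :=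
  add_le_add (dimAt_mono ℳ h p) (dimAt_mono ℳ h q)

lemma qdim_zero_of_rk_eq {N N' : Submodule k V} (h : N ≤ N')
    (hr : rk ℳ p q N' ≤ rk ℳ p q N) : qdim ℳ N N' p = 0 ∧ qdim ℳ N N' q = 0 := by
  have h1 := dimAt_mono ℳ h p
  have h2 := dimAt_mono ℳ h q
  unfold rk at hr
  unfold qdim
  omega

lemma dg_eq_of_rk_eq {N N' : Submodule k V} (h : N ≤ N')
    (hr : rk ℳ p q N' ≤ rk ℳ p q N) : dg ℳ p q θp θq N' = dg ℳ p q θp θq N := by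
  have h1 := dimAt_mono ℳ h p
  have h2 := dimAt_mono ℳ h q
  unfold rk at hr
  unfold dg
  have : dimAt ℳ N p = dimAt ℳ N' p ∧ dimAt ℳ N q = dimAt ℳ N' q := by omega
  rw [this.1, this.2]

lemma dimAt_modular (hdec : DirectSum.IsInternal fun i => ℳ i)
    {N N' : Submodule k V} (hN : N = ⨆ i, N ⊓ ℳ i) (hN' : N' = ⨆ i, N' ⊓ ℳ i) (i : ℤ) :
    dimAt ℳ (N ⊔ N') i + dimAt ℳ (N ⊓ N') i = dimAt ℳ N i + dimAt ℳ N' i := by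
  have key := Submodule.finrank_sup_add_finrank_inf_eq (N ⊓ ℳ i) (N' ⊓ ℳ i)
  have e1 : (N ⊔ N') ⊓ ℳ i = (N ⊓ ℳ i) ⊔ (N' ⊓ ℳ i) := sup_grade ℳ hdec hN hN' i
  have e2 : (N ⊓ N') ⊓ ℳ i = (N ⊓ ℳ i) ⊓ (N' ⊓ ℳ i) := by
    ext x; simp only [Submodule.mem_inf]; tauto
  unfold dimAt
  rw [e1, e2]
  exact_mod_cast key

lemma rk_modular (hdec : DirectSum.IsInternal fun i => ℳ i)
    {N N' : Submodule k V} (hN : N = ⨆ i, N ⊓ ℳ i) (hN' : N' = ⨆ i, N' ⊓ ℳ i) :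
    rk ℳ p q (N ⊔ N') + rk ℳ p q (N ⊓ N') = rk ℳ p q N + rk ℳ p q N' := by
  have h1 := dimAt_modular ℳ hdec hN hN' p
  have h2 := dimAt_modular ℳ hdec hN hN' q
  unfold rk
  omega

lemma dg_modular (hdec : DirectSum.IsInternal fun i => ℳ i)
    {N N' : Submodule k V} (hN : N = ⨆ i, N ⊓ ℳ i) (hN' : N' = ⨆ i, N' ⊓ ℳ i) :
    dg ℳ p q θp θq (N ⊔ N') + dg ℳ p q θp θq (N ⊓ N') =
      dg ℳ p q θp θq N + dg ℳ p q θp θq N' := by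
  have h1 := dimAt_modular ℳ hdec hN hN' p
  have h2 := dimAt_modular ℳ hdec hN hN' q
  unfold dg
  linear_combination θp * h1 + θq * h2

lemma slp_le_iff {F N : Submodule k V} (h : rk ℳ p q F < rk ℳ p q N) (c : ℚ) :
    slp ℳ p q θp θq F N ≤ c ↔
      ((dg ℳ p q θp θq N - dg ℳ p q θp θq F : ℤ) : ℚ) ≤
        c * ((rk ℳ p q N - rk ℳ p q F : ℤ) : ℚ) := by
  rw [slp_eq]
  have hpos : (0 : ℚ) < ((rk ℳ p q N - rk ℳ p q F : ℤ) : ℚ) := by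
    exact_mod_cast sub_pos.mpr h
  rw [div_le_iff₀ hpos]

lemma le_slp_iff {F N : Submodule k V} (h : rk ℳ p q F < rk ℳ p q N) (c : ℚ) :
    c ≤ slp ℳ p q θp θq F N ↔
      c * ((rk ℳ p q N - rk ℳ p q F : ℤ) : ℚ) ≤
        ((dg ℳ p q θp θq N - dg ℳ p q θp θq F : ℤ) : ℚ) := by
  rw [slp_eq]
  have hpos : (0 : ℚ) < ((rk ℳ p q N - rk ℳ p q F : ℤ) : ℚ) := by
    exact_mod_cast sub_pos.mpr h
  rw [le_div_iff₀ hpos]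

end Dims

section MDS

variable {lam : A →ₗ[k] V →ₗ[k] V} [FiniteDimensional k V]

omit [FiniteDimensional k V] in
lemma abs_mul_bound {t a B : ℤ} (h0 : 0 ≤ a) (hB : a ≤ B) :
    -(|t| * B) ≤ t * a ∧ t * a ≤ |t| * B := by
  constructor <;> nlinarith [le_abs_self t, neg_abs_le t, abs_nonneg t]

lemma exists_mds (p q θp θq : ℤ) (hdec : DirectSum.IsInternal fun i => ℳ i)
    {F : Submodule k V}
    (hex : ∃ N, IsLambdaSubmodule ℳ lam N ∧ F < N ∧ rk ℳ p q F < rk ℳ p q N) :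
    ∃ F', IsLambdaSubmodule ℳ lam F' ∧ F < F' ∧ rk ℳ p q F < rk ℳ p q F' ∧
      (∀ N, IsLambdaSubmodule ℳ lam N → F < N → rk ℳ p q F < rk ℳ p q N →
        slp ℳ p q θp θq F N ≤ slp ℳ p q θp θq F F') ∧
      (∀ N, IsLambdaSubmodule ℳ lam N → F ≤ N → rk ℳ p q F < rk ℳ p q N →
        slp ℳ p q θp θq F F' ≤ slp ℳ p q θp θq F N → N ≤ F') := by
  classical
  set S0 : Set (Submodule k V) :=
    {N | IsLambdaSubmodule ℳ lam N ∧ F < N ∧ rk ℳ p q F < rk ℳ p q N} with hS0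
  set C : ℤ := |θp| * dimAt ℳ (⊤ : Submodule k V) p + |θq| * dimAt ℳ (⊤ : Submodule k V) q
    with hCdef
  have hbox : (slp ℳ p q θp θq F) '' S0 ⊆
      (fun pr : ℤ × ℤ => (pr.1 : ℚ) / (pr.2 : ℚ)) ''
        (Set.Icc (-C) C ×ˢ Set.Icc 1 (rk ℳ p q (⊤ : Submodule k V))) := by
    rintro x ⟨N, ⟨hLN, hFN, hrkN⟩, rfl⟩
    have h1p := dimAt_mono ℳ hFN.le p
    have h1q := dimAt_mono ℳ hFN.le q
    have h2p := dimAt_mono ℳ (le_top : N ≤ ⊤) p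
    have h2q := dimAt_mono ℳ (le_top : N ≤ ⊤) q
    have h3p := dimAt_nonneg ℳ F p
    have h3q := dimAt_nonneg ℳ F q
    have bp := abs_mul_bound (t := θp) (a := dimAt ℳ N p - dimAt ℳ F p)
      (B := dimAt ℳ (⊤ : Submodule k V) p) (by omega) (by omega)
    have bq := abs_mul_bound (t := θq) (a := dimAt ℳ N q - dimAt ℳ F q)
      (B := dimAt ℳ (⊤ : Submodule k V) q) (by omega) (by omega)
    have hdg : dg ℳ p q θp θq N - dg ℳ p q θp θq F =
        θp * (dimAt ℳ N p - dimAt ℳ F p) + θq * (dimAt ℳ N q - dimAt ℳ F q) := by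
      unfold dg; ring
    have hrkT := rk_mono ℳ p q (le_top : N ≤ ⊤)
    have hrkF0 : 0 ≤ rk ℳ p q F := add_nonneg h3p h3q
    have hmem1 : dg ℳ p q θp θq N - dg ℳ p q θp θq F ∈ Set.Icc (-C) C := by
      rw [Set.mem_Icc, hdg, hCdef]
      exact ⟨by linarith [bp.1, bq.1], by linarith [bp.2, bq.2]⟩
    have hmem2 : rk ℳ p q N - rk ℳ p q F ∈
        Set.Icc 1 (rk ℳ p q (⊤ : Submodule k V)) := Set.mem_Icc.mpr ⟨by omega, by omega⟩
    exact ⟨(dg ℳ p q θp θq N - dg ℳ p q θp θq F, rk ℳ p q N - rk ℳ p q F),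
      ⟨hmem1, hmem2⟩, (slp_eq ℳ p q θp θq F N).symm⟩
  have hfin : ((slp ℳ p q θp θq F) '' S0).Finite :=
    (Set.Finite.image _ ((Set.finite_Icc _ _).prod (Set.finite_Icc _ _))).subset hbox
  have hne : ((slp ℳ p q θp θq F) '' S0).Nonempty := by
    obtain ⟨N, h⟩ := hex; exact ⟨_, ⟨N, h, rfl⟩⟩
  obtain ⟨μstar, hμmem, hμmax'⟩ := hfin.exists_maximalFor id _ hne
  have hμmax : ∀ N ∈ S0, slp ℳ p q θp θq F N ≤ μstar := by
    intro N hN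
    rcases le_total (slp ℳ p q θp θq F N) μstar with h | h
    · exact h
    · exact hμmax' ⟨N, hN, rfl⟩ h
  set S1 : Set (Submodule k V) := {N | N ∈ S0 ∧ slp ℳ p q θp θq F N = μstar} with hS1
  have hrfin : ((rk ℳ p q) '' S1).Finite := by
    refine (Set.finite_Icc (rk ℳ p q F + 1) (rk ℳ p q (⊤ : Submodule k V))).subset ?_
    rintro x ⟨N, ⟨⟨hLN, hFN, hrkN⟩, -⟩, rfl⟩
    exact Set.mem_Icc.mpr ⟨by omega, rk_mono ℳ p q (le_top : N ≤ ⊤)⟩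
  have hrne : ((rk ℳ p q) '' S1).Nonempty := by
    obtain ⟨N0, hN0, hy⟩ := hμmem
    exact ⟨rk ℳ p q N0, N0, ⟨hN0, hy⟩, rfl⟩
  obtain ⟨rstar, hrmem, hrmax'⟩ := hrfin.exists_maximalFor id _ hrne
  have hrmax : ∀ N ∈ S1, rk ℳ p q N ≤ rstar := by
    intro N hN
    rcases le_total (rk ℳ p q N) rstar with h | h
    · exact h
    · exact hrmax' ⟨N, hN, rfl⟩ h
  set S2 : Set (Submodule k V) := {N | N ∈ S1 ∧ rk ℳ p q N = rstar} with hS2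
  have hS2ne : S2.Nonempty := by
    obtain ⟨N0, hN0, hy⟩ := hrmem
    exact ⟨N0, hN0, hy⟩
  have hwf : WellFounded ((· > ·) : Submodule k V → Submodule k V → Prop) :=
    (inferInstance : WellFoundedGT (Submodule k V)).wf
  obtain ⟨F', hF'S2, hF'max⟩ := hwf.has_min S2 hS2ne
  obtain ⟨⟨⟨hLF', hFF', hrkF'⟩, hμF'⟩, hrkstar⟩ := hF'S2
  have prop1 : ∀ N, IsLambdaSubmodule ℳ lam N → F < N → rk ℳ p q F < rk ℳ p q N →
      slp ℳ p q θp θq F N ≤ slp ℳ p q θp θq F F' := by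
    intro N hLN hFN hrkN
    rw [hμF']
    exact hμmax N ⟨hLN, hFN, hrkN⟩
  refine ⟨F', hLF', hFF', hrkF', prop1, ?_⟩
  intro N hLN hFN hrkN hμge
  have hFNlt : F < N := lt_of_le_of_ne hFN (by rintro rfl; omega)
  have hNS0 : N ∈ S0 := ⟨hLN, hFNlt, hrkN⟩
  have hμN : slp ℳ p q θp θq F N = μstar :=
    le_antisymm (hμmax N hNS0) (hμF' ▸ hμge)
  -- numeric (ℚ) equalities for N and F'
  have hdN : ((dg ℳ p q θp θq N - dg ℳ p q θp θq F : ℤ) : ℚ) =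
      μstar * ((rk ℳ p q N - rk ℳ p q F : ℤ) : ℚ) := by
    have h1 := (slp_le_iff ℳ p q θp θq hrkN μstar).1 (le_of_eq hμN)
    have h2 := (le_slp_iff ℳ p q θp θq hrkN μstar).1 (le_of_eq hμN.symm)
    linarith
  have hdF' : ((dg ℳ p q θp θq F' - dg ℳ p q θp θq F : ℤ) : ℚ) =
      μstar * ((rk ℳ p q F' - rk ℳ p q F : ℤ) : ℚ) := by
    have h1 := (slp_le_iff ℳ p q θp θq hrkF' μstar).1 (le_of_eq hμF')
    have h2 := (le_slp_iff ℳ p q θp θq hrkF' μstar).1 (le_of_eq hμF'.symm)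
    linarith
  have hLP := lambda_sup ℳ hdec hLF' hLN
  have hLQ := lambda_inf ℳ hdec hLF' hLN
  have hFP : F < (F' ⊔ N) := lt_of_lt_of_le hFF' le_sup_left
  have hFQ : F ≤ (F' ⊓ N) := le_inf hFF'.le hFN
  have hrmod := rk_modular ℳ p q hdec hLF'.1 hLN.1
  have hdmod := dg_modular ℳ p q θp θq hdec hLF'.1 hLN.1
  have hrkFQ : rk ℳ p q F ≤ rk ℳ p q (F' ⊓ N) := rk_mono ℳ p q hFQ
  have hrkF'P : rk ℳ p q F' ≤ rk ℳ p q (F' ⊔ N) := rk_mono ℳ p q (le_sup_left : F' ≤ (F' ⊔ N))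
  have hrkP : rk ℳ p q F < rk ℳ p q (F' ⊔ N) := lt_of_lt_of_le hrkF' hrkF'P
  have hdmodQ : ((dg ℳ p q θp θq (F' ⊔ N) - dg ℳ p q θp θq F : ℤ) : ℚ) +
      ((dg ℳ p q θp θq (F' ⊓ N) - dg ℳ p q θp θq F : ℤ) : ℚ) =
      ((dg ℳ p q θp θq F' - dg ℳ p q θp θq F : ℤ) : ℚ) +
      ((dg ℳ p q θp θq N - dg ℳ p q θp θq F : ℤ) : ℚ) := by
    have h : dg ℳ p q θp θq (F' ⊔ N) - dg ℳ p q θp θq F + (dg ℳ p q θp θq (F' ⊓ N) - dg ℳ p q θp θq F) =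
        dg ℳ p q θp θq F' - dg ℳ p q θp θq F + (dg ℳ p q θp θq N - dg ℳ p q θp θq F) := by
      linarith [hdmod]
    exact_mod_cast h
  have hrmodQ : ((rk ℳ p q (F' ⊔ N) - rk ℳ p q F : ℤ) : ℚ) + ((rk ℳ p q (F' ⊓ N) - rk ℳ p q F : ℤ) : ℚ) =
      ((rk ℳ p q F' - rk ℳ p q F : ℤ) : ℚ) + ((rk ℳ p q N - rk ℳ p q F : ℤ) : ℚ) := by
    have h : rk ℳ p q (F' ⊔ N) - rk ℳ p q F + (rk ℳ p q (F' ⊓ N) - rk ℳ p q F) =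
        rk ℳ p q F' - rk ℳ p q F + (rk ℳ p q N - rk ℳ p q F) := by
      linarith [hrmod]
    exact_mod_cast h
  have hPS0 : (F' ⊔ N) ∈ S0 := ⟨hLP, hFP, hrkP⟩
  have hPle := (slp_le_iff ℳ p q θp θq hrkP μstar).1 (hμmax (F' ⊔ N) hPS0)
  rcases eq_or_lt_of_le hrkFQ with hQ0 | hQpos
  · -- rk (F' ⊓ N) = rk F : contradiction
    exfalso
    have hdQ : dg ℳ p q θp θq (F' ⊓ N) = dg ℳ p q θp θq F :=
      dg_eq_of_rk_eq ℳ p q θp θq hFQ (le_of_eq hQ0.symm)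
    have hdQ0 : ((dg ℳ p q θp θq (F' ⊓ N) - dg ℳ p q θp θq F : ℤ) : ℚ) = 0 := by
      rw [hdQ]; simp
    have hrQ0 : ((rk ℳ p q (F' ⊓ N) - rk ℳ p q F : ℤ) : ℚ) = 0 := by
      rw [← hQ0]; simp
    have hdP : μstar * ((rk ℳ p q (F' ⊔ N) - rk ℳ p q F : ℤ) : ℚ) ≤
        ((dg ℳ p q θp θq (F' ⊔ N) - dg ℳ p q θp θq F : ℤ) : ℚ) := by
      have : μstar * ((rk ℳ p q (F' ⊔ N) - rk ℳ p q F : ℤ) : ℚ) =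
          μstar * ((rk ℳ p q F' - rk ℳ p q F : ℤ) : ℚ) +
          μstar * ((rk ℳ p q N - rk ℳ p q F : ℤ) : ℚ) := by
        linear_combination μstar * hrmodQ - μstar * hrQ0
      linarith [hdmodQ, hdN, hdF', hdQ0]
    have hμP : slp ℳ p q θp θq F (F' ⊔ N) = μstar :=
      le_antisymm (hμmax (F' ⊔ N) hPS0) ((le_slp_iff ℳ p q θp θq hrkP μstar).2 hdP)
    have hPS1 : (F' ⊔ N) ∈ S1 := ⟨hPS0, hμP⟩
    have := hrmax (F' ⊔ N) hPS1
    -- rk (F' ⊔ N) = rk F' + rk N - rk (F' ⊓ N) and rk (F' ⊓ N) = rk F < rk N gives rk (F' ⊔ N) > rk F' = rstar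
    omega
  · -- rk (F' ⊓ N) > rk F
    have hFQlt : F < (F' ⊓ N) := lt_of_le_of_ne hFQ (by rintro rfl; omega)
    have hQS0 : (F' ⊓ N) ∈ S0 := ⟨hLQ, hFQlt, hQpos⟩
    have hQle := (slp_le_iff ℳ p q θp θq hQpos μstar).1 (hμmax (F' ⊓ N) hQS0)
    have hdP : μstar * ((rk ℳ p q (F' ⊔ N) - rk ℳ p q F : ℤ) : ℚ) ≤
        ((dg ℳ p q θp θq (F' ⊔ N) - dg ℳ p q θp θq F : ℤ) : ℚ) := by
      have hmul : μstar * ((rk ℳ p q (F' ⊔ N) - rk ℳ p q F : ℤ) : ℚ) =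
          μstar * ((rk ℳ p q F' - rk ℳ p q F : ℤ) : ℚ) +
          μstar * ((rk ℳ p q N - rk ℳ p q F : ℤ) : ℚ) -
          μstar * ((rk ℳ p q (F' ⊓ N) - rk ℳ p q F : ℤ) : ℚ) := by
        linear_combination μstar * hrmodQ
      linarith [hdmodQ, hdN, hdF', hQle]
    have hμP : slp ℳ p q θp θq F (F' ⊔ N) = μstar :=
      le_antisymm (hμmax (F' ⊔ N) hPS0) ((le_slp_iff ℳ p q θp θq hrkP μstar).2 hdP)
    have hPS1 : (F' ⊔ N) ∈ S1 := ⟨hPS0, hμP⟩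
    have hrkPle := hrmax (F' ⊔ N) hPS1
    have hrkPeq : rk ℳ p q (F' ⊔ N) = rstar := by omega
    have hPS2 : (F' ⊔ N) ∈ S2 := ⟨hPS1, hrkPeq⟩
    have hnot : ¬ (F' ⊔ N) > F' := hF'max (F' ⊔ N) hPS2
    have hPF' : (F' ⊔ N) = F' := by
      by_contra hne
      exact hnot (lt_of_le_of_ne le_sup_left (fun h => hne h.symm))
    calc N ≤ (F' ⊔ N) := le_sup_right
    _ = F' := hPF'

end MDS

section Chain

variable {lam : A →ₗ[k] V →ₗ[k] V} [FiniteDimensional k V]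

lemma qdim_sum_eq (p q : ℤ) (F N : Submodule k V) :
    qdim ℳ F N p + qdim ℳ F N q = rk ℳ p q N - rk ℳ p q F := by
  unfold qdim rk; ring

/-- trivial chain when `F = ⊤` -/
lemma hn_trivial (p q θp θq : ℤ) {F : Submodule k V} (hF : IsLambdaSubmodule ℳ lam F)
    (htop : F = ⊤) :
    ∃ (s : ℕ) (g : ℕ → Submodule k V), g 0 = F ∧ g s = ⊤ ∧
      (∀ i < s, g i < g (i + 1)) ∧
      (∀ i, IsLambdaSubmodule ℳ lam (g i)) ∧
      (∀ i < s, SemistableQuot ℳ lam p q θp θq (g i) (g (i + 1))) ∧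
      (∀ i, i + 1 < s → QuotGT ℳ p q θp θq (g i) (g (i + 1)) (g (i + 1)) (g (i + 2))) := by
  exact ⟨0, fun _ => F, rfl, htop, by omega, fun _ => hF, by omega, by omega⟩

/-- final rank-zero step -/
lemma hn_laststep (p q θp θq : ℤ) (hdec : DirectSum.IsInternal fun i => ℳ i)
    {F : Submodule k V} (hF : IsLambdaSubmodule ℳ lam F) (hne : F ≠ ⊤)
    (hnex : ¬ ∃ N, IsLambdaSubmodule ℳ lam N ∧ F < N ∧ rk ℳ p q F < rk ℳ p q N) :
    ∃ (s : ℕ) (g : ℕ → Submodule k V), g 0 = F ∧ g s = ⊤ ∧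
      (∀ i < s, g i < g (i + 1)) ∧
      (∀ i, IsLambdaSubmodule ℳ lam (g i)) ∧
      (∀ i < s, SemistableQuot ℳ lam p q θp θq (g i) (g (i + 1))) ∧
      (∀ i, i + 1 < s → QuotGT ℳ p q θp θq (g i) (g (i + 1)) (g (i + 1)) (g (i + 2))) := by
  push_neg at hnex
  refine ⟨1, fun i => if i = 0 then F else ⊤, if_pos rfl, if_neg one_ne_zero, ?_, ?_, ?_, ?_⟩
  · intro i hi
    interval_cases i
    simpa using lt_top_iff_ne_top.mpr hne
  · intro i
    by_cases h : i = 0 <;> simp [h, hF, lambda_top ℳ hdec lam]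
  · intro i hi
    interval_cases i
    simp only [if_pos rfl, if_neg one_ne_zero]
    intro N hLN h1 h2
    left
    exact qdim_zero_of_rk_eq ℳ p q h1.le (hnex N hLN h1)
  · omega

/-- main recursion -/
lemma hn_from (p q θp θq : ℤ) (hdec : DirectSum.IsInternal fun i => ℳ i) :
    ∀ (n : ℕ) (F : Submodule k V),
      rk ℳ p q (⊤ : Submodule k V) ≤ rk ℳ p q F + n →
      IsLambdaSubmodule ℳ lam F →
    ∃ (s : ℕ) (g : ℕ → Submodule k V), g 0 = F ∧ g s = ⊤ ∧
      (∀ i < s, g i < g (i + 1)) ∧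
      (∀ i, IsLambdaSubmodule ℳ lam (g i)) ∧
      (∀ i < s, SemistableQuot ℳ lam p q θp θq (g i) (g (i + 1))) ∧
      (∀ i, i + 1 < s → QuotGT ℳ p q θp θq (g i) (g (i + 1)) (g (i + 1)) (g (i + 2))) := by
  intro n
  induction n with
  | zero =>
    intro F hle hF
    rcases eq_or_ne F ⊤ with htop | hne
    · exact hn_trivial ℳ p q θp θq hF htop
    · refine hn_laststep ℳ p q θp θq hdec hF hne ?_
      rintro ⟨N, hLN, hFN, hrkN⟩
      have := rk_mono ℳ p q (le_top : N ≤ ⊤)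
      omega
  | succ n ih =>
    intro F hle hF
    rcases eq_or_ne F ⊤ with htop | hne
    · exact hn_trivial ℳ p q θp θq hF htop
    by_cases hex : ∃ N, IsLambdaSubmodule ℳ lam N ∧ F < N ∧ rk ℳ p q F < rk ℳ p q N
    · obtain ⟨F', hLF', hFF', hrkF', hmax, hmds⟩ := exists_mds ℳ p q θp θq hdec hex
      obtain ⟨s, g, hg0, hgs, hchain, hLg, hss, hgt⟩ := ih F' (by omega) hLF'
      refine ⟨s + 1, fun i => Nat.casesOn i F (fun m => g m), rfl, hgs, ?_, ?_, ?_, ?_⟩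
      · intro i hi
        cases i with
        | zero => show F < g 0; rw [hg0]; exact hFF'
        | succ m => exact hchain m (by omega)
      · intro i
        cases i with
        | zero => exact hF
        | succ m => exact hLg m
      · intro i hi
        cases i with
        | zero =>
          show SemistableQuot ℳ lam p q θp θq F (g 0)
          rw [hg0]
          intro N hLN h1 h2
          rcases lt_or_ge (rk ℳ p q F) (rk ℳ p q N) with hr | hr
          · right
            refine ⟨?_, ?_⟩
            · rw [qdim_sum_eq]; omega
            · exact hmax N hLN h1 hr
          · left
            exact qdim_zero_of_rk_eq ℳ p q h1.le hr
        | succ m => exact hss m (by omega)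
      · intro i hi
        cases i with
        | zero =>
          have hs1 : 0 < s := by omega
          show QuotGT ℳ p q θp θq F (g 0) (g 0) (g 1)
          rw [hg0]
          have hchain0 : F' < g 1 := by
            have := hchain 0 hs1; rwa [hg0] at this
          have hL1 : IsLambdaSubmodule ℳ lam (g 1) := hLg 1
          rcases lt_or_ge (rk ℳ p q F') (rk ℳ p q (g 1)) with hr | hr
          · right
            refine ⟨by rw [qdim_sum_eq]; omega, by rw [qdim_sum_eq]; omega, ?_⟩
            -- strict slope decrease
            show slp ℳ p q θp θq F' (g 1) < slp ℳ p q θp θq F F'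
            by_contra hcon
            push_neg at hcon
            -- hcon : slp F F' ≤ slp F' (g 1)
            set c := slp ℳ p q θp θq F F' with hc
            have hdF' : ((dg ℳ p q θp θq F' - dg ℳ p q θp θq F : ℤ) : ℚ) =
                c * ((rk ℳ p q F' - rk ℳ p q F : ℤ) : ℚ) := by
              have h1 := (slp_le_iff ℳ p q θp θq hrkF' c).1 (le_refl c)
              have h2 := (le_slp_iff ℳ p q θp θq hrkF' c).1 (le_refl c)
              linarith
            have hd1 := (le_slp_iff ℳ p q θp θq hr c).1 hcon
            have hrkFg1 : rk ℳ p q F < rk ℳ p q (g 1) := by omega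
            have hsplit_d : ((dg ℳ p q θp θq (g 1) - dg ℳ p q θp θq F : ℤ) : ℚ) =
                ((dg ℳ p q θp θq (g 1) - dg ℳ p q θp θq F' : ℤ) : ℚ) +
                ((dg ℳ p q θp θq F' - dg ℳ p q θp θq F : ℤ) : ℚ) := by
              push_cast; ring
            have hsplit_r : c * ((rk ℳ p q (g 1) - rk ℳ p q F : ℤ) : ℚ) =
                c * ((rk ℳ p q (g 1) - rk ℳ p q F' : ℤ) : ℚ) +
                c * ((rk ℳ p q F' - rk ℳ p q F : ℤ) : ℚ) := by
              push_cast; ring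
            have hkey : c ≤ slp ℳ p q θp θq F (g 1) := by
              rw [le_slp_iff ℳ p q θp θq hrkFg1]
              linarith
            have : g 1 ≤ F' := hmds (g 1) hL1 (hFF'.le.trans hchain0.le) hrkFg1 hkey
            exact absurd (lt_of_lt_of_le hchain0 this) (lt_irrefl F')
          · left
            exact qdim_zero_of_rk_eq ℳ p q hchain0.le hr
        | succ m =>
          exact hgt m (by omega)
    · exact hn_laststep ℳ p q θp θq hdec hF hne hex

end Chain


end HNaux

/-- Every `[p,q]`-graded `λ`-module over an `ℕ`-graded `k`-algebra `A` with `A₀ = k`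
and finite-dimensional graded pieces admits a Harder–Narasimhan filtration:
a chain `0 = M⁰ ⊂ M¹ ⊂ ⋯ ⊂ Mˢ = M` of `λ`-submodules whose successive quotients are
semistable with respect to `(θp,θq) = (dim M_q, -dim M_p)` and strictly decreasing
in the sense `M¹/M⁰ ≻ M²/M¹ ≻ ⋯ ≻ Mˢ/Mˢ⁻¹`. -/
theorem lambdaModule_hn_filtration_exists
    (𝒜 : ℕ → Submodule k A) [GradedAlgebra 𝒜]
    (hA0 : Module.finrank k ↥(𝒜 0) = 1) (hAfin : ∀ n, FiniteDimensional k ↥(𝒜 n))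
    [FiniteDimensional k V]
    (ℳ : ℤ → Submodule k V) (p q : ℤ)
    (hdec : DirectSum.IsInternal fun i => ℳ i)
    (hsupp : ∀ i : ℤ, i < p ∨ q < i → ℳ i = ⊥)
    (lam : A →ₗ[k] V →ₗ[k] V)
    (hgr : ∀ n : ℕ, ∀ a ∈ 𝒜 n, ∀ i : ℤ, ∀ v ∈ ℳ i, lam a v ∈ ℳ (i + n)) :
    ∃ (s : ℕ) (F : Fin (s + 1) → Submodule k V),
      F 0 = ⊥ ∧ F (Fin.last s) = ⊤ ∧
      (∀ i : Fin s, F i.castSucc < F i.succ) ∧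
      (∀ i, IsLambdaSubmodule ℳ lam (F i)) ∧
      (∀ i : Fin s,
        SemistableQuot ℳ lam p q (dimAt ℳ (⊤ : Submodule k V) q)
          (-(dimAt ℳ (⊤ : Submodule k V) p)) (F i.castSucc) (F i.succ)) ∧
      (∀ i j : Fin s, (j : ℕ) = (i : ℕ) + 1 →
        QuotGT ℳ p q (dimAt ℳ (⊤ : Submodule k V) q) (-(dimAt ℳ (⊤ : Submodule k V) p))
          (F i.castSucc) (F i.succ) (F j.castSucc) (F j.succ)) := by
  classical
  have hdim0 : ∀ i : ℤ, dimAt ℳ (⊥ : Submodule k V) i = 0 := by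
    intro i
    unfold dimAt
    rw [bot_inf_eq]
    simp
  have hrk0 : HNaux.rk ℳ p q (⊥ : Submodule k V) = 0 := by
    unfold HNaux.rk
    rw [hdim0 p, hdim0 q]
    ring
  have hrkT : 0 ≤ HNaux.rk ℳ p q (⊤ : Submodule k V) :=
    add_nonneg (HNaux.dimAt_nonneg ℳ _ p) (HNaux.dimAt_nonneg ℳ _ q)
  obtain ⟨s, g, hg0, hgs, hchain, hL, hss, hgt⟩ :=
    HNaux.hn_from (lam := lam) ℳ p q (dimAt ℳ (⊤ : Submodule k V) q)
      (-(dimAt ℳ (⊤ : Submodule k V) p)) hdec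
      (HNaux.rk ℳ p q (⊤ : Submodule k V)).toNat ⊥
      (by rw [hrk0]; omega)
      (HNaux.lambda_bot ℳ lam)
  refine ⟨s, fun i => g (i : ℕ), ?_, ?_, ?_, ?_, ?_, ?_⟩
  · simpa using hg0
  · simpa [Fin.val_last] using hgs
  · intro i
    simpa [Fin.coe_castSucc, Fin.val_succ] using hchain (i : ℕ) i.isLt
  · intro i
    exact hL (i : ℕ)
  · intro i
    simpa [Fin.coe_castSucc, Fin.val_succ] using hss (i : ℕ) i.isLt
  · intro i j hj
    have hlt : (i : ℕ) + 1 < s := by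
      have := j.isLt; omega
    have := hgt (i : ℕ) hlt
    simpa [Fin.coe_castSucc, Fin.val_succ, hj] using this

end
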